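/- Hölder-type inequality for the Orlicz function Φ: for every c > 0 there is a constant C > 0 such that for every ball B of radius 1 in ℝⁿ, every d > 0, and all measurable functions f, g on B, one has ∫_B Φ(|f g|) dx / log(e + d) ≤ C ∫_B |f| dx + (C/d) ∫_B (e^{c|g|} − 1) dx. -/

import Mathlib

open MeasureTheory

noncomputable def Phi (t : ℝ) : ℝ := t / Real.log (Real.exp 1 + t)

lemma one_le_logE {x : ℝ} (hx : 0 ≤ x) : 1 ≤ Real.log (Real.exp 1 + x) := by
  have h1 : Real.log (Real.exp 1) ≤ Real.log (Real.exp 1 + x) :=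
    Real.log_le_log (Real.exp_pos 1) (by linarith)
  rwa [Real.log_exp] at h1

lemma Phi_nonneg {x : ℝ} (hx : 0 ≤ x) : 0 ≤ Phi x :=
  div_nonneg hx (by linarith [one_le_logE hx])

lemma Phi_le_self {x : ℝ} (hx : 0 ≤ x) : Phi x ≤ x :=
  div_le_self hx (one_le_logE hx)

lemma young (s b : ℝ) (hs : 0 ≤ s) :
    s * b ≤ s * Real.log (Real.exp 1 + s) + Real.exp b := by
  rcases eq_or_lt_of_le hs with h | h
  · simp [← h]; positivity
  · have h1 := Real.add_one_le_exp (b - Real.log s)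
    have h2 : Real.exp (b - Real.log s) = Real.exp b / s := by
      rw [Real.exp_sub, Real.exp_log h]
    have h3 : s * (b - Real.log s + 1) ≤ Real.exp b := by
      have := mul_le_mul_of_nonneg_left (h1.trans_eq h2) hs
      calc s * (b - Real.log s + 1) ≤ s * (Real.exp b / s) := by nlinarith
        _ = Real.exp b := by field_simp
    have h4 : s * Real.log s ≤ s * Real.log (Real.exp 1 + s) :=
      mul_le_mul_of_nonneg_left
        (Real.log_le_log h (by linarith [Real.exp_pos 1])) hs
    nlinarith [h3, h4]

set_option maxHeartbeats 1000000 in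
lemma ptwise (c d u v : ℝ) (hc : 0 < c) (hd : 0 < d) (hu : 0 ≤ u) (hv : 0 ≤ v) :
    Phi (u * v) ≤ Real.log (Real.exp 1 + d) *
      ((2/c + 2) * u + ((2/c + 2)/d) * (Real.exp (c * v) - 1)) := by
  set L := Real.log (Real.exp 1 + d) with hLdef
  have hL : 1 ≤ L := one_le_logE hd.le
  have hexpv : 1 ≤ Real.exp (c * v) := Real.one_le_exp (by positivity)
  have huv : 0 ≤ u * v := mul_nonneg hu hv
  by_cases hcv : c * v < 1
  · -- easy case : Phi (u*v) ≤ u*v ≤ u/c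
    have h1 : Phi (u * v) ≤ u * v := Phi_le_self huv
    have h2 : u * v ≤ u / c := by
      rw [div_eq_mul_inv]
      have : v ≤ c⁻¹ := by
        rw [← one_div]; rw [le_div_iff₀ hc]; nlinarith
      exact mul_le_mul_of_nonneg_left this hu
    have h3 : u / c ≤ L * ((2/c + 2) * u) := by
      have hcu : u / c ≤ (2/c + 2) * u := by
        rw [div_eq_mul_inv, mul_comm]
        have : c⁻¹ ≤ 2/c + 2 := by
          rw [div_eq_mul_inv]
          nlinarith [inv_nonneg.mpr hc.le]
        exact mul_le_mul_of_nonneg_right this hu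
      nlinarith [mul_nonneg (mul_nonneg (by positivity : (0:ℝ) ≤ 2/c + 2) hu) (sub_nonneg.mpr hL)]
    have h4 : 0 ≤ L * (((2/c + 2)/d) * (Real.exp (c * v) - 1)) := by
      apply mul_nonneg (by linarith)
      apply mul_nonneg (by positivity)
      linarith
    calc Phi (u * v) ≤ u / c := h1.trans h2
      _ ≤ L * ((2/c + 2) * u) := h3
      _ ≤ _ := by nlinarith [h4]
  · -- main case : c*v ≥ 1
    push_neg at hcv
    set s := u / c with hsdef
    set t := c * v with htdef
    have hs : 0 ≤ s := by positivity
    have hst : u * v = s * t := by rw [hsdef, htdef]; field_simp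
    clear_value L s t
    have hlog1 : 1 ≤ Real.log (Real.exp 1 + u * v) := one_le_logE huv
    -- Young with shift log (d / L)
    have hY : s * (t - Real.log (d / L)) ≤ s * Real.log (Real.exp 1 + s) +
        Real.exp (t - Real.log (d / L)) := young s _ hs
    have hM : Real.exp (t - Real.log (d / L)) = Real.exp t * (L / d) := by
      rw [Real.exp_sub, Real.exp_log (by positivity)]
      field_simp
    have hnum : u * v ≤ s * Real.log (Real.exp 1 + s) + Real.exp t * (L / d)
        + s * Real.log (d / L) := by
      rw [hst]
      nlinarith [hY, hM]
    -- divide by log(e + u*v)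
    have hPhi : Phi (u * v) ≤ (s * Real.log (Real.exp 1 + s) + Real.exp t * (L / d)
        + s * Real.log (d / L)) / Real.log (Real.exp 1 + u * v) := by
      unfold Phi
      exact (div_le_div_iff_of_pos_right (by linarith)).mpr hnum
    -- bound the three terms
    have hA : s * Real.log (Real.exp 1 + s) / Real.log (Real.exp 1 + u * v) ≤ s := by
      have hmono : Real.log (Real.exp 1 + s) ≤ Real.log (Real.exp 1 + u * v) := by
        apply Real.log_le_log (by positivity)
        have : s ≤ u * v := by
          rw [hst]
          nlinarith
        linarith
      rw [div_le_iff₀ (by linarith)]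
      have h0 : 0 ≤ Real.log (Real.exp 1 + s) := by linarith [one_le_logE hs]
      nlinarith
    have hB : Real.exp t * (L / d) / Real.log (Real.exp 1 + u * v) ≤
        2 * (Real.exp t - 1) * (L / d) := by
      have h1 : Real.exp t * (L / d) / Real.log (Real.exp 1 + u * v) ≤
          Real.exp t * (L / d) := by
        apply div_le_self (by positivity) hlog1
      have h2 : Real.exp t ≤ 2 * (Real.exp t - 1) := by
        have : (2:ℝ) ≤ Real.exp 1 := by
          have := Real.exp_one_gt_d9; linarith
        have ht1 : Real.exp 1 ≤ Real.exp t := Real.exp_le_exp.mpr hcv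
        linarith
      have h3 : 0 ≤ L / d := by positivity
      nlinarith
    have hC : s * Real.log (d / L) / Real.log (Real.exp 1 + u * v) ≤ s * L := by
      have hlogM : Real.log (d / L) ≤ L := by
        have h1 : Real.log (d / L) ≤ Real.log d := by
          apply Real.log_le_log (by positivity)
          rw [div_le_iff₀ (by linarith : (0:ℝ) < L)]
          nlinarith
        have h2 : Real.log d ≤ L := by
          rw [hLdef]
          exact Real.log_le_log hd (by linarith [Real.exp_pos 1])
        linarith
      by_cases hsl : 0 ≤ s * Real.log (d / L)
      · have := div_le_self hsl hlog1
        have h5 : s * Real.log (d / L) ≤ s * L := mul_le_mul_of_nonneg_left hlogM hs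
        linarith
      · push_neg at hsl
        have h6 : s * Real.log (d / L) / Real.log (Real.exp 1 + u * v) ≤ 0 :=
          div_nonpos_of_nonpos_of_nonneg hsl.le (by linarith)
        nlinarith
    -- assemble
    have hsum : (s * Real.log (Real.exp 1 + s) + Real.exp t * (L / d)
        + s * Real.log (d / L)) / Real.log (Real.exp 1 + u * v)
        = s * Real.log (Real.exp 1 + s) / Real.log (Real.exp 1 + u * v)
        + Real.exp t * (L / d) / Real.log (Real.exp 1 + u * v)
        + s * Real.log (d / L) / Real.log (Real.exp 1 + u * v) := by
      ring
    have hfin : Phi (u * v) ≤ s + 2 * (Real.exp t - 1) * (L / d) + s * L := by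
      rw [hsum] at hPhi
      linarith
    -- conclude
    have hgoal : s + 2 * (Real.exp t - 1) * (L / d) + s * L ≤
        L * ((2/c + 2) * u + ((2/c + 2)/d) * (Real.exp (c * v) - 1)) := by
      have hsu : s ≤ (1/c + 1) * u := by
        rw [hsdef, div_eq_mul_inv, mul_comm]
        have : c⁻¹ ≤ 1/c + 1 := by rw [one_div]; linarith
        exact mul_le_mul_of_nonneg_right this hu
      have hte : Real.exp t = Real.exp (c * v) := by rw [htdef]
      have hcpos : 0 < 1/c + 1 := by positivity
      have hexp1 : 0 ≤ Real.exp (c * v) - 1 := by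
        rw [← hte]; linarith
      have e1 : s + s * L ≤ 2 * ((1/c + 1) * u) * L := by
        nlinarith [mul_le_mul_of_nonneg_right hsu (by linarith : (0:ℝ) ≤ L),
          mul_nonneg (mul_nonneg hcpos.le hu) (by linarith : (0:ℝ) ≤ L - 1)]
      have e2 : (2:ℝ) * ((1/c + 1) * u) * L = L * ((2/c + 2) * u) := by ring
      have e3 : 2 * (Real.exp t - 1) * (L / d) =
          L * ((2/d) * (Real.exp (c * v) - 1)) := by rw [hte]; ring
      have e4 : L * ((2/d) * (Real.exp (c * v) - 1)) ≤
          L * (((2/c + 2)/d) * (Real.exp (c * v) - 1)) := by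
        apply mul_le_mul_of_nonneg_left _ (by linarith)
        apply mul_le_mul_of_nonneg_right _ hexp1
        rw [div_le_div_iff₀ hd hd]
        nlinarith [div_nonneg (by norm_num : (0:ℝ) ≤ 2) hc.le]
      calc s + 2 * (Real.exp t - 1) * (L / d) + s * L
          ≤ 2 * ((1/c + 1) * u) * L + 2 * (Real.exp t - 1) * (L / d) := by linarith
        _ = L * ((2/c + 2) * u) + L * ((2/d) * (Real.exp (c * v) - 1)) := by
            rw [e2, e3]
        _ ≤ L * ((2/c + 2) * u) + L * (((2/c + 2)/d) * (Real.exp (c * v) - 1)) := by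
            linarith
        _ = _ := by ring
    have hte2 : Real.exp t = Real.exp (c * v) := by rw [htdef]
    rw [hte2]
    linarith

/-- Hölder-type inequality for the Orlicz function `Phi` on balls of radius 1. -/
theorem orlicz_holder (n : ℕ) (c : ℝ) (hc : 0 < c) :
    ∃ C > 0, ∀ (z : EuclideanSpace ℝ (Fin n)) (d : ℝ), 0 < d →
      ∀ f g : EuclideanSpace ℝ (Fin n) → ℝ, Measurable f → Measurable g →
        IntegrableOn f (Metric.ball z 1) →
        IntegrableOn (fun x => Real.exp (c * |g x|) - 1) (Metric.ball z 1) →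
        (∫ x in Metric.ball z 1, Phi (|f x * g x|)) / Real.log (Real.exp 1 + d) ≤
          C * (∫ x in Metric.ball z 1, |f x|) +
            (C / d) * ∫ x in Metric.ball z 1, (Real.exp (c * |g x|) - 1) := by
  refine ⟨2/c + 2, by positivity, ?_⟩
  intro z d hd f g hfm hgm hf hg
  set B := Metric.ball z 1 with hB
  set L := Real.log (Real.exp 1 + d) with hLdef
  have hL : 1 ≤ L := one_le_logE hd.le
  have hC : (0:ℝ) < 2/c + 2 := by positivity
  have hf' : IntegrableOn (fun x => |f x|) B := hf.abs
  have hRHS : IntegrableOn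
      (fun x => L * ((2/c + 2) * |f x| + ((2/c + 2)/d) * (Real.exp (c * |g x|) - 1))) B := by
    exact ((hf'.const_mul (2/c + 2)).add (hg.const_mul ((2/c + 2)/d))).const_mul L
  have hbound : ∀ x, ‖Phi (|f x * g x|)‖ ≤
      L * ((2/c + 2) * |f x| + ((2/c + 2)/d) * (Real.exp (c * |g x|) - 1)) := by
    intro x
    rw [Real.norm_eq_abs, abs_of_nonneg (Phi_nonneg (abs_nonneg _)), abs_mul]
    exact ptwise c d |f x| |g x| hc hd (abs_nonneg _) (abs_nonneg _)
  have hmeasP : Measurable fun x => Phi (|f x * g x|) := by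
    have h := (hfm.mul hgm).abs
    unfold Phi
    exact h.div (Real.measurable_log.comp (measurable_const.add h))
  have hLHS : IntegrableOn (fun x => Phi (|f x * g x|)) B :=
    Integrable.mono' hRHS hmeasP.aestronglyMeasurable (Filter.Eventually.of_forall hbound)
  rw [div_le_iff₀ (by linarith : (0:ℝ) < L)]
  calc ∫ x in B, Phi (|f x * g x|)
      ≤ ∫ x in B, L * ((2/c + 2) * |f x| + ((2/c + 2)/d) * (Real.exp (c * |g x|) - 1)) := by
        refine integral_mono hLHS hRHS ?_
        intro x
        have := hbound x
        rw [Real.norm_eq_abs] at this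
        exact (le_abs_self _).trans this
    _ = ((2/c + 2) * (∫ x in B, |f x|) + ((2/c + 2)/d) * ∫ x in B, (Real.exp (c * |g x|) - 1)) * L := by
        rw [integral_const_mul, integral_add (hf'.const_mul (2/c + 2)) (hg.const_mul ((2/c + 2)/d)),
          integral_const_mul, integral_const_mul]
        ring
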